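/- In the n-agent moving-knife procedure, if agent 1's true density is uniform and agent 1 reports ℓ⁽ⁿ⁾ instead, then in every round before agent 1 is allocated, agent 1's mark under ℓ⁽ⁿ⁾ is weakly to the right of agent 1's mark under the uniform density; consequently agent 1 is allocated no earlier under the misreport than under truth-telling. -/

import Mathlib

open MeasureTheory Set intervalIntegral

/-- The density `ℓ⁽ⁿ⁾`: `3/2` on `[0, 1/(2n))`, `1/2` on `[1/(2n), 1/n)`, `1` on `[1/n, 1]`. -/
noncomputable def ell (n : ℕ) : ℝ → ℝ := fun x =>
  if x < 1 / (2 * n) then 3/2 else if x < 1 / n then 1/2 else 1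

/-- Antiderivative of `ell n` on `[0, ∞)`. -/
noncomputable def ellF (n : ℕ) : ℝ → ℝ := fun x =>
  max (min (3/2 * x) (x/2 + 1/(2 * (n : ℝ)))) x

lemma ellF_low {n : ℕ} {x : ℝ} (h0 : 0 ≤ x) (h : x ≤ 1 / (2 * (n : ℝ))) :
    ellF n x = 3/2 * x := by
  unfold ellF
  rw [min_eq_left (by linarith), max_eq_left (by linarith)]

lemma ellF_mid {n : ℕ} {x : ℝ} (h1 : 1 / (2 * (n : ℝ)) ≤ x) (h2 : x ≤ 1 / (n : ℝ)) :
    ellF n x = x/2 + 1/(2 * (n : ℝ)) := by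
  have : 1 / (n : ℝ) = 2 * (1 / (2 * (n : ℝ))) := by ring
  unfold ellF
  rw [min_eq_right (by linarith), max_eq_left (by linarith)]

lemma ellF_high {n : ℕ} {x : ℝ} (h : 1 / (n : ℝ) ≤ x) : ellF n x = x := by
  have : 1 / (n : ℝ) = 2 * (1 / (2 * (n : ℝ))) := by ring
  unfold ellF
  rcases le_total (3/2 * x) (x/2 + 1/(2 * (n : ℝ))) with hm | hm
  · rw [min_eq_left hm, max_eq_right (by linarith)]
  · rw [min_eq_right hm, max_eq_right (by linarith)]

lemma ellF_ge_self (n : ℕ) (x : ℝ) : x ≤ ellF n x := le_max_right _ _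

lemma ell_intervalIntegrable (n : ℕ) (c t : ℝ) :
    IntervalIntegrable (ell n) volume c t := by
  have hm : Measurable (ell n) := by
    unfold ell
    exact Measurable.ite measurableSet_Iio measurable_const
      (Measurable.ite measurableSet_Iio measurable_const measurable_const)
  rw [intervalIntegrable_iff]
  refine ((integrableOn_const_iff (C := (3/2:ℝ))).2 (Or.inr ?_)).mono' hm.aestronglyMeasurable
    (ae_of_all _ fun x => ?_)
  · exact measure_Ioc_lt_top
  · show ‖ell n x‖ ≤ (3/2 : ℝ)
    rw [Real.norm_eq_abs]
    unfold ell
    split_ifs <;> rw [abs_of_nonneg (by norm_num)] <;> norm_num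

lemma ell_integral (n : ℕ) (hn : 1 ≤ n) {c t : ℝ} (hc : 0 ≤ c) (hct : c ≤ t) :
    (∫ s in c..t, ell n s) = ellF n t - ellF n c := by
  have hN : (0 : ℝ) < (n : ℝ) := by exact_mod_cast hn
  have hab : (1 : ℝ) / (2 * n) < 1 / n := by
    rw [div_lt_div_iff₀ (by positivity) hN]; linarith
  have ha : (0 : ℝ) < 1 / (2 * n) := by positivity
  have hcont : ContinuousOn (ellF n) (Icc c t) := by
    apply Continuous.continuousOn
    unfold ellF
    fun_prop
  refine integral_eq_sub_of_hasDeriv_right_of_le hct hcont (fun x hx => ?_)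
    (ell_intervalIntegrable n c t)
  have hx0 : 0 < x := lt_of_le_of_lt hc hx.1
  rcases lt_trichotomy x (1 / (2 * (n : ℝ))) with h1 | h1 | h1
  · -- x < 1/(2n), ell = 3/2
    have he : ell n x = 3/2 := if_pos h1
    rw [he]
    have hd : HasDerivWithinAt (fun y : ℝ => 3/2 * y) (3/2) (Ioi x) x := by
      simpa using ((hasDerivAt_id x).const_mul (3/2 : ℝ)).hasDerivWithinAt
    refine hd.congr_of_eventuallyEq ?_ (by rw [ellF_low hx0.le h1.le])
    filter_upwards [Ioo_mem_nhdsGT_of_mem ⟨le_refl x, h1⟩] with y hy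
    exact ellF_low (hx0.trans hy.1).le hy.2.le
  · -- x = 1/(2n), ell = 1/2 (right derivative)
    have he : ell n x = 1/2 := by
      rw [show ell n x = if x < 1 / (2 * (n:ℝ)) then 3/2 else if x < 1/(n:ℝ) then 1/2 else 1
        from rfl, if_neg (by simp [h1]), if_pos (by rw [h1]; exact hab)]
    rw [he]
    have hd : HasDerivWithinAt (fun y : ℝ => y/2 + 1/(2 * (n : ℝ))) (1/2) (Ioi x) x := by
      simpa using (((hasDerivAt_id x).div_const 2).add_const (1/(2*(n:ℝ)))).hasDerivWithinAt
    have hxb : x < 1 / (n : ℝ) := by rw [h1]; exact hab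
    refine hd.congr_of_eventuallyEq ?_ (by rw [ellF_mid h1.ge hxb.le])
    filter_upwards [Ioo_mem_nhdsGT_of_mem ⟨le_refl x, hxb⟩] with y hy
    exact ellF_mid (h1.ge.trans hy.1.le) hy.2.le
  · -- x > 1/(2n)
    rcases lt_trichotomy x (1 / (n : ℝ)) with h2 | h2 | h2
    · have he : ell n x = 1/2 := by
        rw [show ell n x = if x < 1 / (2 * (n:ℝ)) then 3/2 else if x < 1/(n:ℝ) then 1/2 else 1
          from rfl, if_neg (not_lt.2 h1.le), if_pos h2]
      rw [he]
      have hd : HasDerivWithinAt (fun y : ℝ => y/2 + 1/(2 * (n : ℝ))) (1/2) (Ioi x) x := by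
        simpa using (((hasDerivAt_id x).div_const 2).add_const (1/(2*(n:ℝ)))).hasDerivWithinAt
      refine hd.congr_of_eventuallyEq ?_ (by rw [ellF_mid h1.le h2.le])
      filter_upwards [Ioo_mem_nhdsGT_of_mem ⟨le_refl x, h2⟩] with y hy
      exact ellF_mid (h1.le.trans hy.1.le) hy.2.le
    all_goals
    · have hbx : 1 / (n : ℝ) ≤ x := by first | exact h2.ge | exact h2.le
      have he : ell n x = 1 := by
        rw [show ell n x = if x < 1 / (2 * (n:ℝ)) then 3/2 else if x < 1/(n:ℝ) then 1/2 else 1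
          from rfl, if_neg (not_lt.2 h1.le), if_neg (not_lt.2 hbx)]
      rw [he]
      refine (hasDerivWithinAt_id x (Ioi x)).congr_of_eventuallyEq ?_ (ellF_high hbx)
      filter_upwards [self_mem_nhdsWithin] with y (hy : x < y)
      exact ellF_high (hbx.trans hy.le)

/-- In the moving-knife procedure, from any current point `c`, agent 1's mark under the
misreport `ℓ⁽ⁿ⁾` lies weakly to the right of the mark under the true uniform density
(which is `c + 1/n`): if `y'` satisfies `∫_c^{y'} ℓ⁽ⁿ⁾ = 1/n` then `y' ≥ c + 1/n`.
Equivalently, for all `c ≤ t` in `[0,1]`, `∫_c^t ℓ⁽ⁿ⁾ ≥ 1/n` implies `t − c ≥ 1/n`.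
Consequently agent 1 is allocated no earlier under the misreport than under truth-telling. -/
theorem ell_mark_weakly_right_of_uniform_mark
    (n : ℕ) (hn : 1 ≤ n) :
    (∀ c y' : ℝ, 0 ≤ c → c ≤ y' → y' ≤ 1 →
      (∫ t in c..y', ell n t) = 1 / n → c + 1 / n ≤ y') ∧
    (∀ c t : ℝ, 0 ≤ c → c ≤ t → t ≤ 1 →
      (∫ s in c..t, ell n s) ≥ 1 / n → t - c ≥ 1 / n) := by
  have hN : (0 : ℝ) < (n : ℝ) := by exact_mod_cast hn
  have key : ∀ c t : ℝ, 0 ≤ c → c ≤ t → t ≤ 1 →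
      (∫ s in c..t, ell n s) ≥ 1 / n → t - c ≥ 1 / n := by
    intro c t hc hct ht hint
    rw [ell_integral n hn hc hct] at hint
    have hFc : c ≤ ellF n c := ellF_ge_self n c
    have hFt : (1 : ℝ) / n ≤ ellF n t := by
      have : (0 : ℝ) ≤ ellF n c := hc.trans hFc
      linarith
    have htb : 1 / (n : ℝ) ≤ t := by
      by_contra h
      push_neg at h
      have h0t : 0 ≤ t := hc.trans hct
      have : ellF n t ≤ t/2 + 1/(2 * (n : ℝ)) := by
        unfold ellF
        have ht2 : t ≤ t/2 + 1/(2 * (n : ℝ)) := by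
          have : 1 / (n : ℝ) = 2 * (1 / (2 * (n : ℝ))) := by ring
          linarith
        exact max_le (min_le_right _ _) ht2
      have : ellF n t < 1 / (n : ℝ) := by
        have : 1 / (n : ℝ) = 2 * (1 / (2 * (n : ℝ))) := by ring
        linarith
      linarith
    rw [ellF_high htb] at hint
    linarith
  refine ⟨fun c y' hc hcy hy1 heq => ?_, key⟩
  have := key c y' hc hcy hy1 (le_of_eq heq.symm)
  linarith
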